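/- arXiv:cs/9809035 — 2 statements merged into one kernel-verified Lean document; each statement's English description precedes it below -/
import Mathlib

section
/- For any convex polygon P of diameter D and any ε > 0, there is a convex polygon Q with at most O(√(D/ε)) vertices such that P ⊆ Q and every point of Q is within distance ε of P (Dudley's approximation theorem in the plane). -/
open Metric

open scoped RealInnerProductSpace

section DudleyAux

variable {F : Type*} [NormedAddCommGroup F] [InnerProductSpace ℝ F]

lemma dudley_exists_proj {P : Set F} (hne : P.Nonempty) (hc : IsCompact P)
    (hconv : Convex ℝ P) (z : F) : ∃ p ∈ P, ∀ x ∈ P, ⟪z - p, x - p⟫ ≤ 0 := by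
  obtain ⟨p, hpP, hp⟩ := exists_norm_eq_iInf_of_complete_convex hne hc.isComplete hconv z
  exact ⟨p, hpP, (norm_eq_iInf_iff_real_inner_le_zero hconv hpP).1 hp⟩

lemma dudley_proj_lip {z₁ z₂ p₁ p₂ : F} (h₁ : ⟪z₁ - p₁, p₂ - p₁⟫ ≤ 0)
    (h₂ : ⟪z₂ - p₂, p₁ - p₂⟫ ≤ 0) : ‖p₁ - p₂‖ ≤ ‖z₁ - z₂‖ := by
  have key : ‖p₁ - p₂‖ ^ 2 ≤ ⟪z₁ - z₂, p₁ - p₂⟫ := by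
    have h1' : ⟪z₁ - p₁, p₁ - p₂⟫ ≥ 0 := by
      have : p₁ - p₂ = -(p₂ - p₁) := by abel
      rw [this, inner_neg_right]; linarith
    have expand : ⟪z₁ - z₂, p₁ - p₂⟫
        = ⟪z₁ - p₁, p₁ - p₂⟫ - ⟪z₂ - p₂, p₁ - p₂⟫ + ⟪p₁ - p₂, p₁ - p₂⟫ := by
      have : z₁ - z₂ = (z₁ - p₁) - (z₂ - p₂) + (p₁ - p₂) := by abel
      rw [this, inner_add_left, inner_sub_left]
    rw [expand, real_inner_self_eq_norm_sq]
    linarith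
  rcases eq_or_lt_of_le (norm_nonneg (p₁ - p₂)) with h | h
  · rw [← h]; exact norm_nonneg _
  · have := le_trans key (real_inner_le_norm _ _)
    nlinarith

lemma dudley_unit_cmp {a b : F} {r : ℝ} (hr : 0 < r) (ha : r ≤ ‖a‖) (hb : r ≤ ‖b‖) :
    ‖‖a‖⁻¹ • a - ‖b‖⁻¹ • b‖ ≤ 2 * ‖a - b‖ / r := by
  have ha0 : (0:ℝ) < ‖a‖ := lt_of_lt_of_le hr ha
  have hb0 : (0:ℝ) < ‖b‖ := lt_of_lt_of_le hr hb
  have key : ‖a‖⁻¹ • a - ‖b‖⁻¹ • b = ‖a‖⁻¹ • (a - b) + (‖a‖⁻¹ - ‖b‖⁻¹) • b := by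
    rw [smul_sub, sub_smul]; abel
  rw [key]
  have h1 : ‖‖a‖⁻¹ • (a - b)‖ = ‖a - b‖ / ‖a‖ := by
    rw [norm_smul, norm_inv, norm_norm]; ring
  have h2 : ‖(‖a‖⁻¹ - ‖b‖⁻¹) • b‖ ≤ ‖a - b‖ / ‖a‖ := by
    rw [norm_smul, Real.norm_eq_abs]
    have : ‖a‖⁻¹ - ‖b‖⁻¹ = (‖b‖ - ‖a‖) / (‖a‖ * ‖b‖) := by field_simp
    rw [this, abs_div, abs_of_pos (by positivity : (0:ℝ) < ‖a‖ * ‖b‖)]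
    have h3 : |‖b‖ - ‖a‖| ≤ ‖a - b‖ := by
      rw [abs_sub_comm]; exact abs_norm_sub_norm_le _ _
    rw [div_mul_eq_mul_div, div_le_div_iff₀ (by positivity) ha0]
    nlinarith [abs_nonneg (‖b‖ - ‖a‖),
      mul_le_mul_of_nonneg_right (mul_le_mul_of_nonneg_right h3 hb0.le) ha0.le]
  calc ‖‖a‖⁻¹ • (a - b) + (‖a‖⁻¹ - ‖b‖⁻¹) • b‖
      ≤ ‖‖a‖⁻¹ • (a - b)‖ + ‖(‖a‖⁻¹ - ‖b‖⁻¹) • b‖ := norm_add_le _ _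
    _ ≤ ‖a - b‖ / ‖a‖ + ‖a - b‖ / ‖a‖ := by rw [h1]; linarith
    _ = 2 * ‖a - b‖ / ‖a‖ := by ring
    _ ≤ 2 * ‖a - b‖ / r := by
        apply div_le_div_of_nonneg_left (by positivity) hr ha

noncomputable def dudleyDir (θ : ℝ) : EuclideanSpace ℝ (Fin 2) := WithLp.toLp 2 ![Real.cos θ, Real.sin θ]

lemma dudleyDir_norm (θ : ℝ) : ‖dudleyDir θ‖ = 1 := by
  rw [EuclideanSpace.norm_eq]
  simp only [dudleyDir, WithLp.ofLp_toLp, Fin.sum_univ_two, Matrix.cons_val_zero, Matrix.cons_val_one,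
    Matrix.head_cons, Real.norm_eq_abs, sq_abs]
  rw [← Real.sqrt_one]
  congr 1
  nlinarith [Real.sin_sq_add_cos_sq θ]

lemma dudley_one_sub_cos (x : ℝ) : 1 - Real.cos x ≤ x ^ 2 / 2 := by
  have h : Real.cos (2 * (x/2)) = 2 * Real.cos (x/2) ^ 2 - 1 := Real.cos_two_mul _
  rw [(by ring : 2 * (x/2) = x)] at h
  have h2 : Real.sin (x/2) ^ 2 ≤ (x/2) ^ 2 := Real.sin_sq_le_sq
  have h3 : Real.sin (x/2) ^ 2 + Real.cos (x/2) ^ 2 = 1 := Real.sin_sq_add_cos_sq _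
  nlinarith

lemma dudleyDir_dist (θ₁ θ₂ : ℝ) : ‖dudleyDir θ₁ - dudleyDir θ₂‖ ≤ |θ₁ - θ₂| := by
  have key : (Real.cos θ₁ - Real.cos θ₂) ^ 2 + (Real.sin θ₁ - Real.sin θ₂) ^ 2
      ≤ (θ₁ - θ₂) ^ 2 := by
    have h : (Real.cos θ₁ - Real.cos θ₂) ^ 2 + (Real.sin θ₁ - Real.sin θ₂) ^ 2
        = 2 - 2 * Real.cos (θ₁ - θ₂) := by
      rw [Real.cos_sub]
      nlinarith [Real.sin_sq_add_cos_sq θ₁, Real.sin_sq_add_cos_sq θ₂]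
    have h2 := dudley_one_sub_cos (θ₁ - θ₂)
    linarith
  rw [EuclideanSpace.norm_eq]
  simp only [Fin.sum_univ_two, Real.norm_eq_abs, sq_abs]
  have h0 : (dudleyDir θ₁ - dudleyDir θ₂) 0 = Real.cos θ₁ - Real.cos θ₂ := rfl
  have h1 : (dudleyDir θ₁ - dudleyDir θ₂) 1 = Real.sin θ₁ - Real.sin θ₂ := rfl
  rw [h0, h1, show |θ₁ - θ₂| = Real.sqrt ((θ₁ - θ₂)^2) from (Real.sqrt_sq_eq_abs _).symm]
  exact Real.sqrt_le_sqrt key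

lemma dudley_exists_angle {a b R : ℝ} (hR : 0 < R) (h : a^2 + b^2 = R^2) :
    ∃ θ : ℝ, R * Real.cos θ = a ∧ R * Real.sin θ = b := by
  have habs : -R ≤ a ∧ a ≤ R := abs_le.1 (by
    rw [← abs_of_pos hR]
    exact sq_le_sq.1 (by nlinarith [sq_nonneg b, sq_abs a, sq_abs R] : a^2 ≤ R^2))
  have ha1 : -1 ≤ a / R := by rw [le_div_iff₀ hR]; linarith [habs.1]
  have ha2 : a / R ≤ 1 := by rw [div_le_one hR]; exact habs.2
  have hsin : Real.sin (Real.arccos (a/R)) = |b| / R := by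
    rw [Real.sin_arccos]
    rw [show 1 - (a/R)^2 = (b/R)^2 by field_simp; nlinarith]
    rw [Real.sqrt_sq_eq_abs, abs_div, abs_of_pos hR]
  have hcos : Real.cos (Real.arccos (a/R)) = a / R := Real.cos_arccos ha1 ha2
  rcases le_or_gt 0 b with hb | hb
  · exact ⟨Real.arccos (a/R), by rw [hcos]; field_simp,
      by rw [hsin, abs_of_nonneg hb]; field_simp⟩
  · refine ⟨-Real.arccos (a/R), ?_, ?_⟩
    · rw [Real.cos_neg, hcos]; field_simp
    · rw [Real.sin_neg, hsin, abs_of_neg hb]; field_simp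

end DudleyAux

set_option maxHeartbeats 2000000 in
/-- Dudley's approximation theorem in the plane: there is an absolute constant `C` such
that for any compact convex `P ⊆ ℝ²` of diameter `D` and any `ε > 0`, there is a convex
polygon `Q ⊇ P` with at most `C·√(D/ε)` vertices all of whose points are within
distance `ε` of `P`. -/
theorem dudley_approximation :
    ∃ C : ℝ, 0 < C ∧
      ∀ (P : Set (EuclideanSpace ℝ (Fin 2))) (D ε : ℝ),
        P.Nonempty → IsCompact P → Convex ℝ P → Metric.diam P = D → 0 < ε → ε ≤ D →
        ∃ V : Finset (EuclideanSpace ℝ (Fin 2)),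
          (V.card : ℝ) ≤ C * Real.sqrt (D / ε) ∧
          P ⊆ convexHull ℝ (V : Set (EuclideanSpace ℝ (Fin 2))) ∧
          ∀ x ∈ convexHull ℝ (V : Set (EuclideanSpace ℝ (Fin 2))), infDist x P ≤ ε := by
  refine ⟨100, by norm_num, ?_⟩
  intro P D ε hne hcomp hconv hdiam hε hεD
  classical
  have hD : 0 < D := lt_of_lt_of_le hε hεD
  obtain ⟨z₀, hz₀⟩ := hne
  set δ := Real.sqrt (ε * D / 8) with hδdef
  have hδpos : 0 < δ := Real.sqrt_pos.2 (by positivity)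
  have hδsq : δ ^ 2 = ε * D / 8 := Real.sq_sqrt (by positivity)
  set R := 4 * D with hRdef
  have hR : 0 < R := by positivity
  set m := ⌈Real.pi * R / δ⌉₊ with hmdef
  have hm0 : 0 < m := Nat.ceil_pos.2 (by positivity)
  have hm0' : (0:ℝ) < m := by exact_mod_cast hm0
  have hmR : Real.pi * R / (m:ℝ) ≤ δ := by
    have h1 : Real.pi * R / δ ≤ m := Nat.le_ceil _
    rw [div_le_iff₀ hδpos] at h1
    rw [div_le_iff₀ hm0']
    linarith
  set z : ℕ → EuclideanSpace ℝ (Fin 2) :=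
    fun j => z₀ + R • dudleyDir (2 * Real.pi * j / m) with hzdef
  have hz_dist : ∀ j, ‖z j - z₀‖ = R := by
    intro j
    have : z j - z₀ = R • dudleyDir (2 * Real.pi * j / m) := by simp [hzdef]
    rw [this, norm_smul, dudleyDir_norm, Real.norm_eq_abs, abs_of_pos hR, mul_one]
  choose p hpP hpvar using fun j : ℕ => dudley_exists_proj ⟨z₀, hz₀⟩ hcomp hconv (z j)
  have hPz₀ : ∀ x ∈ P, ‖x - z₀‖ ≤ D := by
    intro x hx
    rw [← dist_eq_norm, ← hdiam]
    exact dist_le_diam_of_mem hcomp.isBounded hx hz₀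
  have ht : ∀ j, 3 * D ≤ ‖z j - p j‖ := by
    intro j
    have h1 : ‖z j - z₀‖ ≤ ‖z j - p j‖ + ‖p j - z₀‖ := by
      have h : z j - z₀ = (z j - p j) + (p j - z₀) := by abel
      rw [h]; exact norm_add_le _ _
    have h2 := hPz₀ (p j) (hpP j)
    rw [hz_dist j] at h1
    rw [hRdef] at h1
    linarith
  have htpos : ∀ j, (0:ℝ) < ‖z j - p j‖ := fun j => lt_of_lt_of_le (by positivity) (ht j)
  set u : ℕ → EuclideanSpace ℝ (Fin 2) := fun j => ‖z j - p j‖⁻¹ • (z j - p j) with hudef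
  have hu_norm : ∀ j, ‖u j‖ = 1 := by
    intro j
    rw [hudef]
    simp only [norm_smul, norm_inv, norm_norm]
    rw [inv_mul_cancel₀ (htpos j).ne']
  set v : ℕ → EuclideanSpace ℝ (Fin 2) := fun j => p j + ε • u j with hvdef
  set V : Finset (EuclideanSpace ℝ (Fin 2)) := (Finset.range m).image v with hVdef
  -- cardinality bound
  have hsqrt1 : 1 ≤ Real.sqrt (D / ε) := by
    rw [show (1:ℝ) = Real.sqrt 1 from Real.sqrt_one.symm]
    exact Real.sqrt_le_sqrt ((one_le_div hε).2 hεD)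
  have hcard : (V.card : ℝ) ≤ 100 * Real.sqrt (D / ε) := by
    have h1 : V.card ≤ m := le_trans Finset.card_image_le (le_of_eq (Finset.card_range m))
    have h2 : (m:ℝ) < Real.pi * R / δ + 1 := Nat.ceil_lt_add_one (by positivity)
    have hprod : Real.sqrt (D / ε) * δ = D / Real.sqrt 8 := by
      rw [hδdef, ← Real.sqrt_mul (by positivity) _]
      rw [show D / ε * (ε * D / 8) = D^2 / 8 by field_simp]
      rw [Real.sqrt_div (by positivity) 8, Real.sqrt_sq hD.le]
    have h8 : Real.sqrt 8 ≤ 3 := by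
      rw [show (3:ℝ) = Real.sqrt 9 by rw [show (9:ℝ) = 3^2 by norm_num, Real.sqrt_sq]; norm_num]
      exact Real.sqrt_le_sqrt (by norm_num)
    have h8' : (0:ℝ) < Real.sqrt 8 := by positivity
    have h3 : Real.pi * R / δ ≤ 99 * Real.sqrt (D / ε) := by
      rw [div_le_iff₀ hδpos]
      have hrw : 99 * Real.sqrt (D/ε) * δ = 99 * (D / Real.sqrt 8) := by
        rw [mul_assoc, hprod]
      rw [hrw, hRdef, show 99 * (D / Real.sqrt 8) = 99 * D / Real.sqrt 8 by ring,
        le_div_iff₀ h8']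
      have hpis : Real.pi * Real.sqrt 8 ≤ 3.15 * 3 :=
        mul_le_mul Real.pi_lt_d2.le h8 h8'.le (by norm_num)
      nlinarith [hpis, hD]
    calc ((V.card : ℕ) : ℝ) ≤ (m : ℝ) := by exact_mod_cast h1
      _ ≤ 99 * Real.sqrt (D/ε) + 1 := by linarith
      _ ≤ 100 * Real.sqrt (D/ε) := by linarith
  -- every point of the hull is within ε of P
  have hVclose : ∀ x ∈ convexHull ℝ (V : Set (EuclideanSpace ℝ (Fin 2))), infDist x P ≤ ε := by
    have hconvS : Convex ℝ {x : EuclideanSpace ℝ (Fin 2) | infDist x P ≤ ε} := by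
      intro x hx y hy a b ha hb hab
      simp only [Set.mem_setOf_eq] at hx hy ⊢
      obtain ⟨px, hpxP, hpx⟩ := hcomp.exists_infDist_eq_dist ⟨z₀, hz₀⟩ x
      obtain ⟨py, hpyP, hpy⟩ := hcomp.exists_infDist_eq_dist ⟨z₀, hz₀⟩ y
      have hmem : a • px + b • py ∈ P := hconv hpxP hpyP ha hb hab
      have hd : dist (a • x + b • y) (a • px + b • py) ≤ a * dist x px + b * dist y py := by
        rw [dist_eq_norm]
        have h : a • x + b • y - (a • px + b • py) = a • (x - px) + b • (y - py) := by
          rw [smul_sub, smul_sub]; abel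
        rw [h]
        calc ‖a • (x - px) + b • (y - py)‖ ≤ ‖a • (x - px)‖ + ‖b • (y - py)‖ := norm_add_le _ _
          _ = a * dist x px + b * dist y py := by
              rw [norm_smul, norm_smul, Real.norm_eq_abs, Real.norm_eq_abs,
                abs_of_nonneg ha, abs_of_nonneg hb, dist_eq_norm, dist_eq_norm]
      calc infDist (a • x + b • y) P ≤ dist (a • x + b • y) (a • px + b • py) :=
            infDist_le_dist_of_mem hmem
        _ ≤ a * dist x px + b * dist y py := hd
        _ ≤ a * ε + b * ε := by
            apply add_le_add
            · exact mul_le_mul_of_nonneg_left (by rw [← hpx]; exact hx) ha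
            · exact mul_le_mul_of_nonneg_left (by rw [← hpy]; exact hy) hb
        _ = ε := by rw [← add_mul, hab, one_mul]
    intro x hx
    have hsub : (V : Set (EuclideanSpace ℝ (Fin 2))) ⊆ {x | infDist x P ≤ ε} := by
      intro y hy
      simp only [hVdef, Finset.coe_image, Set.mem_image, Finset.coe_range, Set.mem_Iio] at hy
      obtain ⟨j, hj, rfl⟩ := hy
      simp only [Set.mem_setOf_eq]
      calc infDist (v j) P ≤ dist (v j) (p j) := infDist_le_dist_of_mem (hpP j)
        _ = ε := by
            rw [dist_eq_norm, hvdef]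
            simp only [add_sub_cancel_left]
            rw [norm_smul, hu_norm j, Real.norm_eq_abs, abs_of_pos hε, mul_one]
    exact convexHull_min hsub hconvS hx
  -- containment P ⊆ hull V
  have hPsub : P ⊆ convexHull ℝ (V : Set (EuclideanSpace ℝ (Fin 2))) := by
    intro q hq
    by_contra hqn
    have hcl : IsClosed (convexHull ℝ (V : Set (EuclideanSpace ℝ (Fin 2)))) :=
      (V.finite_toSet.isCompact_convexHull ℝ).isClosed
    obtain ⟨f, s, hfs, hsf⟩ :=
      geometric_hahn_banach_closed_point (convex_convexHull ℝ _) hcl hqn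
    set w := (InnerProductSpace.toDual ℝ (EuclideanSpace ℝ (Fin 2))).symm f with hwdef
    have hwf : ∀ x, ⟪w, x⟫ = f x := fun x => InnerProductSpace.toDual_symm_apply
    have hvjV : ∀ j, j < m → v j ∈ convexHull ℝ (V : Set (EuclideanSpace ℝ (Fin 2))) := by
      intro j hj
      apply subset_convexHull
      simp only [hVdef, Finset.coe_image, Set.mem_image, Finset.coe_range, Set.mem_Iio]
      exact ⟨j, hj, rfl⟩
    have hw0 : w ≠ 0 := by
      intro h0
      have h1 := hfs _ (hvjV 0 hm0)
      have h2 : f (v 0) = 0 := by rw [← hwf, h0, inner_zero_left]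
      have h3 : f q = 0 := by rw [← hwf, h0, inner_zero_left]
      linarith
    have hwn : (0:ℝ) < ‖w‖ := norm_pos_iff.2 hw0
    set uu : EuclideanSpace ℝ (Fin 2) := ‖w‖⁻¹ • w with huudef
    have huu : ‖uu‖ = 1 := by
      rw [huudef, norm_smul, norm_inv, norm_norm, inv_mul_cancel₀ hwn.ne']
    have hwuu : w = ‖w‖ • uu := by
      rw [huudef, smul_smul, mul_inv_cancel₀ hwn.ne', one_smul]
    -- maximizer of f over P
    obtain ⟨ps, hpsP, hps⟩ := hcomp.exists_isMaxOn ⟨z₀, hz₀⟩ f.continuous.continuousOn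
    -- find ts with ‖ps + ts • uu - z₀‖ = R
    have hg0 : ‖ps + (0:ℝ) • uu - z₀‖ ≤ D := by
      simpa using hPz₀ ps hpsP
    have hg5 : R ≤ ‖ps + (5*D) • uu - z₀‖ := by
      have h1 : ‖(5*D) • uu‖ - ‖z₀ - ps‖ ≤ ‖(5*D) • uu - (z₀ - ps)‖ := norm_sub_norm_le _ _
      have h2 : (5*D) • uu - (z₀ - ps) = ps + (5*D) • uu - z₀ := by abel
      rw [h2] at h1
      have h3 : ‖(5*D) • uu‖ = 5 * D := by
        rw [norm_smul, huu, mul_one, Real.norm_eq_abs, abs_of_pos (by positivity)]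
      have h4 : ‖z₀ - ps‖ ≤ D := by
        rw [norm_sub_rev]; exact hPz₀ ps hpsP
      rw [hRdef]; linarith
    have hgc : ContinuousOn (fun t : ℝ => ‖ps + t • uu - z₀‖) (Set.Icc 0 (5*D)) := by
      fun_prop
    have hmem : R ∈ Set.Icc ‖ps + (0:ℝ) • uu - z₀‖ ‖ps + (5*D) • uu - z₀‖ :=
      ⟨by rw [hRdef]; linarith, hg5⟩
    obtain ⟨ts, htsmem, htR⟩ := intermediate_value_Icc (by positivity) hgc hmem
    set zs : EuclideanSpace ℝ (Fin 2) := ps + ts • uu with hzsdef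
    have hzsR : ‖zs - z₀‖ = R := by rw [hzsdef]; exact htR
    have hts0 : 0 ≤ ts := htsmem.1
    have hts3 : 3 * D ≤ ts := by
      have h1 : ‖zs - z₀‖ ≤ ‖ts • uu‖ + ‖ps - z₀‖ := by
        have h : zs - z₀ = ts • uu + (ps - z₀) := by rw [hzsdef]; abel
        rw [h]; exact norm_add_le _ _
      rw [hzsR, hRdef, norm_smul, huu, mul_one, Real.norm_eq_abs, abs_of_nonneg hts0] at h1
      have h2 := hPz₀ ps hpsP
      linarith
    have htspos : (0:ℝ) < ts := lt_of_lt_of_le (by positivity) hts3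
    have hzvar : ∀ x ∈ P, ⟪zs - ps, x - ps⟫ ≤ 0 := by
      intro x hx
      have h1 : zs - ps = (ts * ‖w‖⁻¹) • w := by
        rw [hzsdef, huudef, add_sub_cancel_left, smul_smul]
      rw [h1, real_inner_smul_left]
      have h2 : ⟪w, x - ps⟫ = f x - f ps := by rw [inner_sub_right, hwf, hwf]
      rw [h2]
      have h3 : f x ≤ f ps := hps hx
      exact mul_nonpos_of_nonneg_of_nonpos (by positivity) (by linarith)
    -- realize zs as z₀ + R • dudleyDir θ
    have hcoord : ((zs - z₀) 0)^2 + ((zs - z₀) 1)^2 = R^2 := by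
      have hnorm := hzsR
      rw [EuclideanSpace.norm_eq] at hnorm
      simp only [Fin.sum_univ_two, Real.norm_eq_abs, sq_abs] at hnorm
      rw [← hnorm, Real.sq_sqrt (by positivity)]
    obtain ⟨θ, hθc, hθs⟩ := dudley_exists_angle hR hcoord
    have hzsθ : zs = z₀ + R • dudleyDir θ := by
      ext i
      fin_cases i
      · show zs 0 = z₀ 0 + R * Real.cos θ
        have : (zs - z₀) 0 = zs 0 - z₀ 0 := rfl
        rw [this] at hθc
        linarith [hθc]
      · show zs 1 = z₀ 1 + R * Real.sin θ
        have : (zs - z₀) 1 = zs 1 - z₀ 1 := rfl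
        rw [this] at hθs
        linarith [hθs]
    -- choose the nearby net index
    set k : ℤ := round (θ * m / (2 * Real.pi)) with hkdef
    set j : ℕ := (k % (m:ℤ)).toNat with hjdef
    have hmZ : (0:ℤ) < (m:ℤ) := by exact_mod_cast hm0
    have hjm : j < m := by
      have h1 : k % (m:ℤ) < (m:ℤ) := Int.emod_lt_of_pos k hmZ
      have h2 : 0 ≤ k % (m:ℤ) := Int.emod_nonneg k hmZ.ne'
      omega
    have hjR : (j:ℝ) = (k:ℝ) - (m:ℝ) * ((k / (m:ℤ) : ℤ) : ℝ) := by
      have h1 : ((k % (m:ℤ)).toNat : ℤ) = k % (m:ℤ) :=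
        Int.toNat_of_nonneg (Int.emod_nonneg k hmZ.ne')
      have h2 : k % (m:ℤ) = k - (m:ℤ) * (k / (m:ℤ)) := Int.emod_def k (m:ℤ)
      have : ((j:ℕ) : ℤ) = k - (m:ℤ) * (k / (m:ℤ)) := by rw [hjdef, h1, h2]
      exact_mod_cast congrArg (Int.cast : ℤ → ℝ) this
    have hjk : dudleyDir (2 * Real.pi * j / m) = dudleyDir (2 * Real.pi * k / m) := by
      have harg : 2 * Real.pi * j / m
          = 2 * Real.pi * k / m + (-(k / (m:ℤ)) : ℤ) * (2 * Real.pi) := by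
        rw [hjR]
        push_cast
        field_simp
        ring
      unfold dudleyDir
      rw [harg, Real.cos_add_int_mul_two_pi, Real.sin_add_int_mul_two_pi]
    have hnear : ‖z j - zs‖ ≤ δ := by
      have h1 : z j - zs = R • (dudleyDir (2 * Real.pi * k / m) - dudleyDir θ) := by
        rw [hzsθ, hzdef]
        simp only [hjk]
        rw [smul_sub]
        abel
      rw [h1, norm_smul, Real.norm_eq_abs, abs_of_pos hR]
      have h2 := dudleyDir_dist (2 * Real.pi * k / m) θ
      have h3 : |2 * Real.pi * k / m - θ| ≤ Real.pi / m := by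
        have h4 := abs_sub_round (θ * m / (2 * Real.pi))
        have h5 : 2 * Real.pi * k / m - θ
            = (2 * Real.pi / m) * ((k:ℝ) - θ * m / (2 * Real.pi)) := by
          field_simp
        rw [h5, abs_mul, abs_of_pos (by positivity : (0:ℝ) < 2 * Real.pi / m)]
        have h6 : |(k:ℝ) - θ * m / (2 * Real.pi)| ≤ 1/2 := by
          rw [abs_sub_comm, hkdef]
          exact h4
        calc 2 * Real.pi / m * |(k:ℝ) - θ * m / (2 * Real.pi)|
            ≤ 2 * Real.pi / m * (1/2) :=
              mul_le_mul_of_nonneg_left h6 (by positivity)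
          _ = Real.pi / m := by ring
      calc R * ‖dudleyDir (2 * Real.pi * k / m) - dudleyDir θ‖
          ≤ R * (Real.pi / m) := mul_le_mul_of_nonneg_left (le_trans h2 h3) hR.le
        _ = Real.pi * R / m := by ring
        _ ≤ δ := hmR
    -- compare projections and normals
    have hlip : ‖p j - ps‖ ≤ δ :=
      le_trans (dudley_proj_lip (hpvar j ps hpsP) (hzvar (p j) (hpP j))) hnear
    have hab : ‖(z j - p j) - (zs - ps)‖ ≤ 2 * δ := by
      have h : (z j - p j) - (zs - ps) = (z j - zs) - (p j - ps) := by abel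
      rw [h]
      exact le_trans (norm_sub_le _ _) (by linarith)
    have hbnorm : ‖zs - ps‖ = ts := by
      rw [hzsdef, add_sub_cancel_left, norm_smul, huu, mul_one, Real.norm_eq_abs,
        abs_of_nonneg hts0]
    have hbuu : ‖zs - ps‖⁻¹ • (zs - ps) = uu := by
      rw [hbnorm, hzsdef, add_sub_cancel_left, smul_smul, inv_mul_cancel₀ htspos.ne', one_smul]
    have hucmp : ‖u j - uu‖ ≤ 4 * δ / (3 * D) := by
      have h1 := dudley_unit_cmp (show (0:ℝ) < 3*D by positivity) (ht j)
        (hbnorm ▸ hts3 : 3*D ≤ ‖zs - ps‖)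
      rw [hbuu] at h1
      calc ‖u j - uu‖ ≤ 2 * ‖(z j - p j) - (zs - ps)‖ / (3*D) := h1
        _ ≤ 2 * (2*δ) / (3*D) := by
            apply div_le_div_of_nonneg_right ?_ (by positivity)
            linarith
        _ = 4 * δ / (3 * D) := by ring
    set η : ℝ := 4 * δ / (3 * D) with hηdef
    have hηpos : 0 < η := by positivity
    have hinner_uu : 1 - η^2/2 ≤ ⟪uu, u j⟫ := by
      have hn : ‖uu - u j‖^2 = 2 - 2 * ⟪uu, u j⟫ := by
        rw [@norm_sub_sq_real, huu, hu_norm]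
        ring
      have h2 : ‖uu - u j‖ ≤ η := by rw [norm_sub_rev]; exact hucmp
      have h3 : ‖uu - u j‖^2 ≤ η^2 := pow_le_pow_left₀ (norm_nonneg _) h2 2
      linarith [hn, h3]
    have hproj_sign : 0 ≤ ⟪u j, p j - ps⟫ := by
      have h1 := hpvar j ps hpsP
      have h2 : ⟪u j, p j - ps⟫ = ‖z j - p j‖⁻¹ * ⟪z j - p j, p j - ps⟫ := by
        rw [hudef, real_inner_smul_left]
      have h3 : ⟪z j - p j, p j - ps⟫ = -⟪z j - p j, ps - p j⟫ := by
        rw [← inner_neg_right]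
        congr 1
        abel
      rw [h2, h3]
      have : 0 ≤ -⟪z j - p j, ps - p j⟫ := by linarith
      positivity
    have hcross : -(η * δ) ≤ ⟪uu - u j, p j - ps⟫ := by
      have h1 : |⟪uu - u j, p j - ps⟫| ≤ ‖uu - u j‖ * ‖p j - ps‖ := abs_real_inner_le_norm _ _
      have h2 : ‖uu - u j‖ * ‖p j - ps‖ ≤ η * δ := by
        apply mul_le_mul (by rw [norm_sub_rev]; exact hucmp) hlip (norm_nonneg _) hηpos.le
      have := abs_le.1 (le_trans h1 h2)
      linarith [this.1]
    -- numeric bounds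
    have hηδ : η * δ ≤ ε / 6 := by
      rw [hηdef]
      rw [div_mul_eq_mul_div, div_le_div_iff₀ (by positivity) (by norm_num : (0:ℝ) < 6)]
      linarith [hδsq]
    have hη2 : ε * (η^2/2) ≤ ε / 9 := by
      rw [hηdef]
      have hsq : (4 * δ / (3 * D))^2 = 16 * δ^2 / (9 * D^2) := by ring
      rw [hsq, hδsq]
      rw [show 16 * (ε * D / 8) / (9 * D^2) = 2 * ε / (9 * D) by field_simp; ring]
      rw [show ε * (2 * ε / (9 * D) / 2) = ε^2 / (9 * D) by ring]
      rw [div_le_div_iff₀ (by positivity) (by norm_num : (0:ℝ) < 9)]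
      have h9 : ε * ε ≤ ε * D := mul_le_mul_of_nonneg_left hεD hε.le
      linarith [h9]
    -- the contradiction
    have e1 : f (v j) = ⟪w, p j⟫ + ε * ⟪w, u j⟫ := by
      rw [← hwf, hvdef]
      rw [inner_add_right, real_inner_smul_right]
    have e2 : ⟪w, u j⟫ = ‖w‖ * ⟪uu, u j⟫ := by
      conv_lhs => rw [hwuu]
      rw [real_inner_smul_left]
    have e3 : ⟪w, p j⟫ = ⟪w, ps⟫ + ‖w‖ * ⟪uu - u j, p j - ps⟫ + ‖w‖ * ⟪u j, p j - ps⟫ := by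
      have h1 : ⟪w, p j⟫ = ⟪w, ps⟫ + ⟪w, p j - ps⟫ := by
        rw [← inner_add_right]
        congr 1
        abel
      have h2 : ⟪w, p j - ps⟫ = ‖w‖ * ⟪uu, p j - ps⟫ := by
        conv_lhs => rw [hwuu]
        rw [real_inner_smul_left]
      have h3 : ⟪uu, p j - ps⟫ = ⟪uu - u j, p j - ps⟫ + ⟪u j, p j - ps⟫ := by
        rw [inner_sub_left]
        ring
      rw [h1, h2, h3]
      ring
    have hfps : ⟪w, ps⟫ = f ps := hwf ps
    have hfq : f q ≤ f ps := hps hq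
    have hlower : f q + ‖w‖ * (ε * (13/18)) ≤ f (v j) := by
      rw [e1, e2, e3, hfps]
      have t1 : -(‖w‖ * (η * δ)) ≤ ‖w‖ * ⟪uu - u j, p j - ps⟫ := by
        have := mul_le_mul_of_nonneg_left hcross hwn.le
        linarith [this]
      have t2 : 0 ≤ ‖w‖ * ⟪u j, p j - ps⟫ := mul_nonneg hwn.le hproj_sign
      have t3 : ε * (‖w‖ * (1 - η^2/2)) ≤ ε * (‖w‖ * ⟪uu, u j⟫) := by
        apply mul_le_mul_of_nonneg_left _ hε.le
        exact mul_le_mul_of_nonneg_left hinner_uu hwn.le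
      have t4 : ‖w‖ * (η * δ) ≤ ‖w‖ * (ε/6) := mul_le_mul_of_nonneg_left hηδ hwn.le
      have t5 : ‖w‖ * (ε * (η^2/2)) ≤ ‖w‖ * (ε/9) := mul_le_mul_of_nonneg_left hη2 hwn.le
      linarith [t1, t2, t3, t4, t5, hfq]
    have hupper : f (v j) < s := hfs _ (hvjV j hjm)
    have hlow2 : s < f q := hsf
    have hpos : 0 < ‖w‖ * (ε * (13/18)) := mul_pos hwn (by positivity)
    linarith [hlower, hupper, hlow2, hpos]
  exact ⟨V, hcard, hPsub, hVclose⟩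
end

section
/- For a convex polygon P whose minimum internal vertex angle is θ, every point p on the boundary of the outer offset polygon P[ε] satisfies ε ≤ dist(p, P) ≤ ε / sin(θ/2). -/
open Metric

open scoped RealInnerProductSpace

set_option maxHeartbeats 1000000 in
private theorem key_alg (σ A B C D : ℝ) (h0 : 0 < σ) (h1 : σ < 1)
    (hi : A^2 + B^2 = 1) (hj : C^2 + D^2 = 1)
    (hA : A < σ) (hC : C < σ) (hB : 0 < B) (hD : D < 0)
    (hp : 2*σ^2 - 1 ≤ A*C + B*D) : 0 ≤ A*D - C*B := by
  have hσ2 : (0:ℝ) < 1 - σ^2 := by nlinarith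
  rcases le_or_gt A 0 with hA0 | hA0
  · rcases le_or_gt C 0 with hC0 | hC0
    · nlinarith [mul_nonneg (neg_nonneg.mpr hA0) (neg_nonneg.mpr hD.le),
        mul_nonneg (neg_nonneg.mpr hC0) hB.le]
    · -- A ≤ 0 < C : want A*D ≥ C*B, i.e. |A||D| ≥ C B
      by_contra hcon
      push_neg at hcon
      have hAD : 0 ≤ A * D := by
        nlinarith [mul_nonneg (neg_nonneg.mpr hA0) (neg_nonneg.mpr hD.le)]
      have hCB : 0 < C * B := mul_pos hC0 hB
      have h5 : 0 < C*B - A*D := by linarith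
      have h6 : 0 < C*B + A*D := by linarith
      have hsq : (A*D)^2 < (C*B)^2 := by nlinarith [mul_pos h5 h6]
      have h2 : A^2 < C^2 := by nlinarith
      have hC2 : C^2 < σ^2 := by nlinarith
      have hB2 : 1 - σ^2 < B^2 := by nlinarith
      have hD2 : 1 - σ^2 < D^2 := by nlinarith
      have h3 : (1-σ^2)*(1-σ^2) < B^2 * D^2 :=
        mul_lt_mul'' hB2 hD2 hσ2.le hσ2.le
      have hBD : 1 - σ^2 < B * (-D) := by
        nlinarith [mul_pos hB (neg_pos.mpr hD)]
      nlinarith [mul_nonpos_of_nonpos_of_nonneg hA0 hC0.le]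
  · rcases le_or_gt C 0 with hC0 | hC0
    · -- C ≤ 0 < A : want -C*B ≥ -A*D i.e. |C|B ≥ A|D|
      by_contra hcon
      push_neg at hcon
      have hAD : A * D < 0 := mul_neg_of_pos_of_neg hA0 hD
      have hCB : C * B ≤ 0 := mul_nonpos_of_nonpos_of_nonneg hC0 hB.le
      have h5 : 0 < C*B - A*D := by linarith
      have h6 : 0 < -(A*D + C*B) := by linarith
      have hsq : (C*B)^2 < (A*D)^2 := by nlinarith [mul_pos h5 h6]
      have h2 : C^2 < A^2 := by nlinarith
      have hA2 : A^2 < σ^2 := by nlinarith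
      have hB2 : 1 - σ^2 < B^2 := by nlinarith
      have hD2 : 1 - σ^2 < D^2 := by nlinarith
      have h3 : (1-σ^2)*(1-σ^2) < B^2 * D^2 :=
        mul_lt_mul'' hB2 hD2 hσ2.le hσ2.le
      have hBD : 1 - σ^2 < B * (-D) := by
        nlinarith [mul_pos hB (neg_pos.mpr hD)]
      nlinarith [mul_nonneg hA0.le (neg_nonneg.mpr hC0)]
    · -- both positive: impossible
      exfalso
      have hA2 : A^2 < σ^2 := by nlinarith
      have hC2 : C^2 < σ^2 := by nlinarith
      have hB2 : 1 - σ^2 < B^2 := by nlinarith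
      have hD2 : 1 - σ^2 < D^2 := by nlinarith
      have h3 : (1-σ^2)*(1-σ^2) < B^2 * D^2 :=
        mul_lt_mul'' hB2 hD2 hσ2.le hσ2.le
      have hBD : 1 - σ^2 < B * (-D) := by
        nlinarith [mul_pos hB (neg_pos.mpr hD)]
      have hAC : A * C < σ * σ := mul_lt_mul'' hA hC hA0.le hC0.le
      nlinarith

private theorem key_alg' (σ d A B C D : ℝ) (h0 : 0 < σ) (h1 : σ < 1) (hd : 0 < d)
    (hi : A^2 + B^2 = d^2) (hj : C^2 + D^2 = d^2)
    (hA : A < σ*d) (hC : C < σ*d) (hB : 0 < B) (hD : D < 0)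
    (hp : (2*σ^2 - 1)*d^2 ≤ A*C + B*D) : 0 ≤ A*D - C*B := by
  have hd2 : (0:ℝ) < d^2 := by positivity
  have h := key_alg σ (A/d) (B/d) (C/d) (D/d) h0 h1
    (by field_simp; linarith) (by field_simp; linarith)
    (by rw [div_lt_iff₀ hd]; linarith [mul_comm σ d])
    (by rw [div_lt_iff₀ hd]; linarith [mul_comm σ d])
    (div_pos hB hd) (div_neg_of_neg_of_pos hD hd)
    (by
        have heq : A/d*(C/d) + B/d*(D/d) = (A*C + B*D)/d^2 := by ring
        rw [heq, le_div_iff₀ hd2]; linarith)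
  have h9 : 0 ≤ (A*D - C*B)/d^2 := by
    calc (0:ℝ) ≤ A/d*(D/d) - C/d*(B/d) := h
      _ = (A*D - C*B)/d^2 := by ring
  have h10 := mul_nonneg h9 hd2.le
  rwa [div_mul_cancel₀ _ (ne_of_gt hd2)] at h10

private theorem inner_two (x y : EuclideanSpace ℝ (Fin 2)) :
    ⟪x, y⟫ = x 0 * y 0 + x 1 * y 1 := by
  simp [PiLp.inner_apply, RCLike.inner_apply, Fin.sum_univ_two]
  ring

set_option maxHeartbeats 4000000 in
/-- For a convex polygon `P` (an intersection of supporting half-planes with unit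
normals) with minimum internal vertex angle `θ`, every boundary point `p` of the outer
offset polygon `P[ε]` satisfies `ε ≤ dist(p, P) ≤ ε / sin(θ/2)`.  (The internal angle
at a vertex shared by edges `i, j` being at least `θ` is encoded as
`cos(π − θ) ≤ ⟪uᵢ, uⱼ⟫`.) -/
theorem offset_boundary_dist_bounds (kk : ℕ)
    (u : Fin kk → EuclideanSpace ℝ (Fin 2)) (c : Fin kk → ℝ)
    (hu : ∀ i, ‖u i‖ = 1)
    (P : Set (EuclideanSpace ℝ (Fin 2)))
    (hP : P = ⋂ i, {x | ⟪u i, x⟫ ≤ c i})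
    (hcompact : IsCompact P) (hint : (interior P).Nonempty)
    (hsupp : ∀ i, ∃ x ∈ P, ⟪u i, x⟫ = c i)
    (θ : ℝ) (hθ0 : 0 < θ) (hθπ : θ < Real.pi)
    (hangle : ∀ i j, i ≠ j →
      (∃ x ∈ P, ⟪u i, x⟫ = c i ∧ ⟪u j, x⟫ = c j) →
      Real.cos (Real.pi - θ) ≤ ⟪u i, u j⟫)
    (ε : ℝ) (hε : 0 < ε) :
    ∀ p ∈ frontier (⋂ i, {x | ⟪u i, x⟫ ≤ c i + ε}),
      ε ≤ infDist p P ∧ infDist p P ≤ ε / Real.sin (θ / 2) := by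
  classical
  intro p hpfront
  set σ := Real.sin (θ/2) with hσdef
  have hσ0 : 0 < σ := Real.sin_pos_of_pos_of_lt_pi (by linarith) (by linarith)
  have hcosσ : 0 < Real.cos (θ/2) :=
    Real.cos_pos_of_mem_Ioo ⟨by linarith [Real.pi_pos], by linarith⟩
  have hσ1 : σ < 1 := by
    nlinarith [Real.sin_sq_add_cos_sq (θ/2)]
  have hcosθ : Real.cos θ = 1 - 2*σ^2 := by
    have : Real.cos (2*(θ/2)) = 2 * Real.cos (θ/2)^2 - 1 := Real.cos_two_mul _
    have h2 := Real.sin_sq_add_cos_sq (θ/2)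
    rw [show θ = 2*(θ/2) by ring]
    linarith
  -- basic facts about P
  have hmemP : ∀ x, x ∈ P ↔ ∀ i, ⟪u i, x⟫ ≤ c i := by
    intro x; rw [hP]; simp [Set.mem_iInter]
  have hPne : P.Nonempty := hint.mono interior_subset
  have hPclosed : IsClosed P := hcompact.isClosed
  have hcont : ∀ i : Fin kk, Continuous fun x : EuclideanSpace ℝ (Fin 2) => ⟪u i, x⟫ :=
    fun i => (continuous_const (y := u i)).inner continuous_id
  have hPconvex : Convex ℝ P := by
    rw [hP]
    exact convex_iInter fun i => convex_halfSpace_le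
      ⟨fun x y => inner_add_right _ _ _, fun r x => real_inner_smul_right _ _ _⟩ (c i)
  -- the offset polygon
  set Q := ⋂ i, {x : EuclideanSpace ℝ (Fin 2) | ⟪u i, x⟫ ≤ c i + ε} with hQdef
  have hQclosed : IsClosed Q :=
    isClosed_iInter fun i => isClosed_le (hcont i) continuous_const
  have hpQ : ∀ i, ⟪u i, p⟫ ≤ c i + ε := by
    have := hQclosed.frontier_subset hpfront
    rw [hQdef] at this
    exact fun i => Set.mem_iInter.1 this i
  obtain ⟨i0, hi0⟩ : ∃ i, c i + ε ≤ ⟪u i, p⟫ := by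
    by_contra h
    push_neg at h
    have hopen : IsOpen (⋂ i, {x : EuclideanSpace ℝ (Fin 2) | ⟪u i, x⟫ < c i + ε}) :=
      isOpen_iInter_of_finite fun i => isOpen_lt (hcont i) continuous_const
    have hsub : (⋂ i, {x : EuclideanSpace ℝ (Fin 2) | ⟪u i, x⟫ < c i + ε}) ⊆ interior Q := by
      apply interior_maximal _ hopen
      intro x hx
      rw [hQdef]
      refine Set.mem_iInter.2 fun i => ?_
      have hxi := Set.mem_iInter.1 hx i
      simp only [Set.mem_setOf_eq] at hxi ⊢
      exact hxi.le
    exact hpfront.2 (hsub (Set.mem_iInter.2 fun i => h i))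
  -- lower bound
  have hlow : ε ≤ infDist p P := by
    obtain ⟨y, hyP, hyd⟩ := hcompact.exists_infDist_eq_dist hPne p
    rw [hyd, dist_eq_norm]
    have h1 : ⟪u i0, p - y⟫ ≤ ‖u i0‖ * ‖p - y‖ := real_inner_le_norm _ _
    rw [hu i0, one_mul] at h1
    have h2 : ⟪u i0, y⟫ ≤ c i0 := (hmemP y).1 hyP i0
    rw [inner_sub_right] at h1
    linarith
  refine ⟨hlow, ?_⟩
  -- p is not in P
  have hpP : p ∉ P := fun h => by have := (hmemP p).1 h i0; linarith
  -- nearest point q in P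
  obtain ⟨q, hqP, hq⟩ :=
    exists_norm_eq_iInf_of_complete_convex hPne hPclosed.isComplete hPconvex p
  have hmin : ∀ x ∈ P, ‖p - q‖ ≤ ‖p - x‖ := by
    intro x hx
    rw [hq]
    exact ciInf_le ⟨0, Set.forall_mem_range.2 fun _ => norm_nonneg _⟩ (⟨x, hx⟩ : P)
  set e := p - q with hedef
  set d := ‖e‖ with hddef
  have hd : 0 < d := by
    rw [hddef, norm_pos_iff, hedef, sub_ne_zero]
    exact fun h => hpP (h ▸ hqP)
  -- the perpendicular vector
  set eperp : EuclideanSpace ℝ (Fin 2) :=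
    (WithLp.equiv 2 (Fin 2 → ℝ)).symm ![-(e 1), e 0] with heperpdef
  have hperp0 : eperp 0 = -(e 1) := rfl
  have hperp1 : eperp 1 = e 0 := rfl
  have he2 : e 0^2 + e 1^2 = d^2 := by
    have : ⟪e, e⟫ = ‖e‖^2 := real_inner_self_eq_norm_sq e
    rw [inner_two] at this
    rw [hddef]; nlinarith
  have hu2 : ∀ i, (u i 0)^2 + (u i 1)^2 = 1 := by
    intro i
    have : ⟪u i, u i⟫ = ‖u i‖^2 := real_inner_self_eq_norm_sq (u i)
    rw [inner_two, hu i] at this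
    nlinarith
  have hab : ∀ i, ⟪u i, e⟫^2 + ⟪u i, eperp⟫^2 = d^2 := by
    intro i
    rw [inner_two, inner_two, hperp0, hperp1]
    have h1 := hu2 i
    linear_combination (e 0^2 + e 1^2) * h1 + he2
  have heperp_orth : ⟪e, eperp⟫ = 0 := by
    rw [inner_two, hperp0, hperp1]; ring
  -- the key claim : some active constraint has large inner product with e
  have hclaim : ∃ i, ⟪u i, q⟫ = c i ∧ σ * d ≤ ⟪u i, e⟫ := by
    by_contra hno
    push_neg at hno
    -- pairwise bound for active constraints
    have hpair : ∀ i j, ⟪u i, q⟫ = c i → ⟪u j, q⟫ = c j → i ≠ j →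
        (2*σ^2 - 1)*d^2 ≤ ⟪u i, e⟫*⟪u j, e⟫ + ⟪u i, eperp⟫*⟪u j, eperp⟫ := by
      intro i j hi hj hij
      have h1 : Real.cos (Real.pi - θ) ≤ ⟪u i, u j⟫ :=
        hangle i j hij ⟨q, hqP, hi, hj⟩
      rw [Real.cos_pi_sub, hcosθ] at h1
      have h2 : ⟪u i, e⟫*⟪u j, e⟫ + ⟪u i, eperp⟫*⟪u j, eperp⟫ = ⟪u i, u j⟫ * d^2 := by
        rw [inner_two, inner_two, inner_two, inner_two, inner_two, hperp0, hperp1]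
        linear_combination (u i 0 * u j 0 + u i 1 * u j 1) * he2
      rw [h2]
      have hd2 : (0:ℝ) ≤ d^2 := sq_nonneg d
      nlinarith
    have key2 : ∀ i j, ⟪u i, q⟫ = c i → ⟪u j, q⟫ = c j →
        0 < ⟪u i, eperp⟫ → ⟪u j, eperp⟫ < 0 →
        0 ≤ ⟪u i, e⟫*⟪u j, eperp⟫ - ⟪u j, e⟫*⟪u i, eperp⟫ := by
      intro i j hi hj hbi hbj
      have hij : i ≠ j := fun h => by rw [h] at hbi; linarith
      exact key_alg' σ d _ _ _ _ hσ0 hσ1 hd (hab i) (hab j)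
        (hno i hi) (hno j hj) hbi hbj (hpair i j hi hj hij)
    -- construct the direction w = e + β • eperp
    set Sp : Finset (Fin kk) :=
      Finset.univ.filter (fun i => ⟪u i, q⟫ = c i ∧ 0 < ⟪u i, eperp⟫) with hSpdef
    set Sm : Finset (Fin kk) :=
      Finset.univ.filter (fun i => ⟪u i, q⟫ = c i ∧ ⟪u i, eperp⟫ < 0) with hSmdef
    set f : Fin kk → ℝ := fun i => -⟪u i, e⟫ / ⟪u i, eperp⟫ with hfdef
    set β : ℝ := if h : Sm.Nonempty then Sm.sup' h f
      else if h2 : Sp.Nonempty then Sp.inf' h2 f else 0 with hβdef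
    have hfle : ∀ i ∈ Sp, ∀ j ∈ Sm, f j ≤ f i := by
      intro i hi j hj
      rw [hSpdef, Finset.mem_filter] at hi
      rw [hSmdef, Finset.mem_filter] at hj
      obtain ⟨-, hi1, hi2⟩ := hi
      obtain ⟨-, hj1, hj2⟩ := hj
      have hk := key2 i j hi1 hj1 hi2 hj2
      simp only [hfdef]
      have e1 : -⟪u j, e⟫ / ⟪u j, eperp⟫ = ⟪u j, e⟫ / (-⟪u j, eperp⟫) := by
        rw [div_neg, neg_div]
      rw [e1, div_le_div_iff₀ (by linarith) hi2]
      nlinarith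
    have hβ_ub : ∀ i ∈ Sp, β ≤ f i := by
      intro i hi
      rw [hβdef]
      split_ifs with h1 h2
      · exact Finset.sup'_le h1 f (fun j hj => hfle i hi j hj)
      · exact Finset.inf'_le f hi
      · exact absurd ⟨i, hi⟩ h2
    have hβ_lb : ∀ j ∈ Sm, f j ≤ β := by
      intro j hj
      rw [hβdef, dif_pos ⟨j, hj⟩]
      exact Finset.le_sup' f hj
    set w : EuclideanSpace ℝ (Fin 2) := e + β • eperp with hwdef
    have hiw : ∀ i, ⟪u i, w⟫ = ⟪u i, e⟫ + β * ⟪u i, eperp⟫ := by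
      intro i
      rw [hwdef, inner_add_right, real_inner_smul_right]
    have hw : ∀ i, ⟪u i, q⟫ = c i → ⟪u i, w⟫ ≤ 0 := by
      intro i hi
      rw [hiw]
      rcases lt_trichotomy (⟪u i, eperp⟫) 0 with hb | hb | hb
      · have hj : i ∈ Sm := by
          rw [hSmdef, Finset.mem_filter]; exact ⟨Finset.mem_univ i, hi, hb⟩
        have h1 : f i ≤ β := hβ_lb i hj
        have h2 : β * ⟪u i, eperp⟫ ≤ f i * ⟪u i, eperp⟫ :=
          mul_le_mul_of_nonpos_right h1 hb.le
        have h3 : f i * ⟪u i, eperp⟫ = -⟪u i, e⟫ := by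
          simp only [hfdef]
          rw [div_mul_cancel₀ _ (ne_of_lt hb)]
        linarith
      · have h1 := hab i
        rw [hb] at h1 ⊢
        have h2 := hno i hi
        have hσd : σ * d < 1 * d := by
          apply mul_lt_mul_of_pos_right hσ1 hd
        nlinarith
      · have hj : i ∈ Sp := by
          rw [hSpdef, Finset.mem_filter]; exact ⟨Finset.mem_univ i, hi, hb⟩
        have h1 : β ≤ f i := hβ_ub i hj
        have h2 : β * ⟪u i, eperp⟫ ≤ f i * ⟪u i, eperp⟫ :=
          mul_le_mul_of_nonneg_right h1 hb.le
        have h3 : f i * ⟪u i, eperp⟫ = -⟪u i, e⟫ := by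
          simp only [hfdef]
          rw [div_mul_cancel₀ _ (ne_of_gt hb)]
        linarith
    -- the inner product of e with w
    have hew : ⟪e, w⟫ = d^2 := by
      rw [hwdef, inner_add_right, real_inner_smul_right, heperp_orth,
        real_inner_self_eq_norm_sq]
      rw [hddef]; ring
    -- find small t > 0 with q + t • w ∈ P and t‖w‖² < 2d²
    have hevent : ∀ᶠ t in nhdsWithin (0:ℝ) (Set.Ioi 0),
        (∀ i, ⟪u i, q + t • w⟫ ≤ c i) ∧ t * ‖w‖^2 < 2*d^2 ∧ 0 < t := by
      refine Filter.Eventually.and (Filter.eventually_all.2 fun i => ?_)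
        (Filter.Eventually.and ?_ ?_)
      · have hiq : ⟪u i, q⟫ ≤ c i := (hmemP q).1 hqP i
        have hrw : ∀ t : ℝ, ⟪u i, q + t • w⟫ = ⟪u i, q⟫ + t * ⟪u i, w⟫ := by
          intro t; rw [inner_add_right, real_inner_smul_right]
        rcases eq_or_lt_of_le hiq with heq | hlt
        · filter_upwards [self_mem_nhdsWithin] with t ht
          rw [hrw]
          have := hw i heq
          have ht' : (0:ℝ) < t := ht
          nlinarith
        · have hcont2 : Filter.Tendsto (fun t : ℝ => ⟪u i, q⟫ + t * ⟪u i, w⟫)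
              (nhdsWithin 0 (Set.Ioi 0)) (nhds (⟪u i, q⟫ + 0 * ⟪u i, w⟫)) :=
            ((continuous_const.add (continuous_id.mul continuous_const)).tendsto 0).mono_left
              nhdsWithin_le_nhds
          rw [zero_mul, add_zero] at hcont2
          filter_upwards [hcont2.eventually_lt_const hlt] with t ht
          rw [hrw]; linarith
      · have hcont2 : Filter.Tendsto (fun t : ℝ => t * ‖w‖^2)
            (nhdsWithin 0 (Set.Ioi 0)) (nhds (0 * ‖w‖^2)) :=
          ((continuous_id.mul continuous_const).tendsto 0).mono_left nhdsWithin_le_nhds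
        rw [zero_mul] at hcont2
        exact hcont2.eventually_lt_const (by positivity)
      · exact self_mem_nhdsWithin
    obtain ⟨t, hmemt, hlt2, ht0⟩ := hevent.exists
    have hxP : q + t • w ∈ P := (hmemP _).2 hmemt
    have hcontr : ‖p - (q + t • w)‖^2 = d^2 - 2*t*d^2 + t^2*‖w‖^2 := by
      have h1 : p - (q + t • w) = e - t • w := by
        rw [hedef]; abel
      rw [h1, norm_sub_sq_real, real_inner_smul_right, hew, norm_smul]
      rw [← hddef]
      rw [mul_pow, Real.norm_eq_abs, sq_abs]
      ring
    have h2 : ‖p - q‖ ≤ ‖p - (q + t • w)‖ := hmin _ hxP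
    have h3 : ‖p - q‖^2 ≤ ‖p - (q + t • w)‖^2 :=
      pow_le_pow_left₀ (norm_nonneg _) h2 2
    rw [hcontr] at h3
    have h4 : ‖p - q‖ = d := by rw [hddef, hedef]
    rw [h4] at h3
    nlinarith [mul_pos ht0 (sub_pos.2 hlt2)]
  -- conclude the upper bound
  obtain ⟨i1, hact1, hge⟩ := hclaim
  have h1 : ⟪u i1, e⟫ = ⟪u i1, p⟫ - c i1 := by
    rw [hedef, inner_sub_right, hact1]
  have h2 : σ * d ≤ ε := by
    have := hpQ i1
    rw [h1] at hge
    linarith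
  have h3 : d ≤ ε / σ := by
    rw [le_div_iff₀ hσ0]
    linarith [mul_comm σ d]
  calc infDist p P ≤ dist p q := infDist_le_dist_of_mem hqP
    _ = d := by rw [dist_eq_norm, hddef, hedef]
    _ ≤ ε / σ := h3
end
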